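/- For every n ≥ 1, let M_n be the (2n+1)×(2n+1) symmetric integer matrix defined as follows (indices 1,…,2n+1): M_n[1][1] = M_n[2][2] = 0 and M_n[i][i] = −2 for all i ≥ 3; M_n[1][2] = M_n[2][3] = 1; M_n[3][4] = 1 and M_n[i][i+1] = 1 for 4 ≤ i ≤ n+1 (first chain, indices 4,…,n+2); M_n[3][n+3] = 1 and M_n[i][i+1] = 1 for n+3 ≤ i ≤ 2n (second chain, indices n+3,…,2n+1); M_n is symmetric and all other entries are 0. Then |det M_n| = 2n. -/

import Mathlib

/-- Adjacency (with 1-based indices `i < j`) in the fork of `2n+1` rational curves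
forming the boundary of the compactified Danielewski surface `Dₙ`. -/
def forkAdj (n i j : ℕ) : Prop :=
  (i = 1 ∧ j = 2) ∨ (i = 2 ∧ j = 3) ∨ (i = 3 ∧ j = 4) ∨
  (4 ≤ i ∧ i ≤ n + 1 ∧ j = i + 1) ∨ (i = 3 ∧ j = n + 3) ∨
  (n + 3 ≤ i ∧ i ≤ 2 * n ∧ j = i + 1)

instance (n i j : ℕ) : Decidable (forkAdj n i j) := by
  unfold forkAdj; infer_instance

/-- The `(2n+1) × (2n+1)` symmetric intersection matrix `M_n` of the fork of
rational curves bounding the Danielewski surface `Dₙ` (1-based indices): the first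
two diagonal entries are `0`, the remaining diagonal entries are `−2`, and the
entries `1` record the intersections along the fork. -/
def forkMatrix (n : ℕ) : Matrix (Fin (2 * n + 1)) (Fin (2 * n + 1)) ℤ :=
  Matrix.of fun i j =>
    if i = j then (if (i : ℕ) + 1 ≤ 2 then 0 else -2)
    else if forkAdj n ((i : ℕ) + 1) ((j : ℕ) + 1) ∨ forkAdj n ((j : ℕ) + 1) ((i : ℕ) + 1)
      then 1 else 0

lemma entry_val (n : ℕ) (a b : Fin (2*n+1)) :
    forkMatrix n a b =
    if (a:ℕ) = (b:ℕ) then (if (a:ℕ) + 1 ≤ 2 then 0 else -2)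
    else if forkAdj n ((a:ℕ)+1) ((b:ℕ)+1) ∨ forkAdj n ((b:ℕ)+1) ((a:ℕ)+1) then 1 else 0 := by
  unfold forkMatrix
  simp only [Matrix.of_apply, Fin.ext_iff]

lemma row0_zero (n : ℕ) (a b : Fin (2*n+1)) (ha : (a:ℕ) = 0) (hb : (b:ℕ) ≠ 1) :
    forkMatrix n a b = 0 := by
  rw [entry_val, ha]
  have := b.isLt
  unfold forkAdj
  split_ifs <;> first | rfl | omega | exact (‹False›).elim

lemma col0_zero (n : ℕ) (a b : Fin (2*n+1)) (ha : 2 ≤ (a:ℕ)) (hb : (b:ℕ) = 0) :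
    forkMatrix n a b = 0 := by
  rw [entry_val, hb]
  have := a.isLt
  unfold forkAdj
  split_ifs <;> first | rfl | omega | exact (‹False›).elim

lemma entry01 (n : ℕ) (a b : Fin (2*n+1)) (ha : (a:ℕ) = 0) (hb : (b:ℕ) = 1) :
    forkMatrix n a b = 1 := by
  rw [entry_val, ha, hb]
  unfold forkAdj
  split_ifs <;> first | rfl | omega | exact (‹False›).elim | exact absurd trivial ‹¬True› |
    exact absurd (Or.inl (Or.inl ⟨rfl, rfl⟩)) ‹_›

lemma entry10 (n : ℕ) (a b : Fin (2*n+1)) (ha : (a:ℕ) = 1) (hb : (b:ℕ) = 0) :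
    forkMatrix n a b = 1 := by
  rw [entry_val, ha, hb]
  unfold forkAdj
  split_ifs <;> first | rfl | omega | exact (‹False›).elim | exact absurd trivial ‹¬True› |
    exact absurd (Or.inr (Or.inl (Or.inl ⟨rfl, rfl⟩))) ‹_›

def pathM (m : ℕ) : Matrix (Fin m) (Fin m) ℤ :=
  Matrix.of fun i j =>
    if i = j then -2 else if (i : ℕ) + 1 = j ∨ (j : ℕ) + 1 = i then 1 else 0

def ffun (m k : ℕ) : ℕ := if k ≤ m then m - k else k

def forkEquiv (m : ℕ) : Equiv.Perm (Fin (2*m+1)) where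
  toFun k := ⟨ffun m k, by unfold ffun; split <;> omega⟩
  invFun k := ⟨ffun m k, by unfold ffun; split <;> omega⟩
  left_inv k := by apply Fin.ext; simp only [ffun]; split_ifs <;> omega
  right_inv k := by apply Fin.ext; simp only [ffun]; split_ifs <;> omega

lemma fork_entry (m : ℕ) (i j : Fin (2*m+1)) (a b : Fin (2*(m+1)+1))
    (ha : (a:ℕ) = ffun m (i:ℕ) + 2) (hb : (b:ℕ) = ffun m (j:ℕ) + 2) :
    forkMatrix (m+1) a b = pathM (2*m+1) i j := by
  have hi := i.isLt; have hj := j.isLt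
  unfold ffun at ha hb
  have hd : ((a:ℕ) = (b:ℕ)) ↔ ((i:ℕ) = (j:ℕ)) := by
    rw [ha, hb]; by_cases h1 : (i:ℕ) ≤ m <;> by_cases h2 : (j:ℕ) ≤ m <;>
      simp only [h1, h2, if_true, if_false] <;> omega
  have h2 : ¬ ((a:ℕ) + 1 ≤ 2) := by rw [ha]; omega
  have hadj : (forkAdj (m+1) ((a:ℕ)+1) ((b:ℕ)+1) ∨ forkAdj (m+1) ((b:ℕ)+1) ((a:ℕ)+1))
      ↔ ((i:ℕ) + 1 = (j:ℕ) ∨ (j:ℕ) + 1 = (i:ℕ)) := by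
    rw [ha, hb]
    unfold forkAdj
    by_cases h1 : (i:ℕ) ≤ m <;> by_cases h2 : (j:ℕ) ≤ m <;>
      simp only [h1, h2, if_true, if_false] <;> omega
  rw [entry_val, if_neg h2]
  unfold pathM
  simp only [Matrix.of_apply, Fin.ext_iff]
  by_cases hij : (a:ℕ) = (b:ℕ)
  · rw [if_pos hij, if_pos (hd.mp hij)]
  · rw [if_neg hij, if_neg (fun h => hij (hd.mpr h)), if_congr hadj rfl rfl]

lemma pathM_shift (m : ℕ) :
    (pathM (m+1)).submatrix Fin.succ Fin.succ = pathM m := by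
  ext i j
  simp only [Matrix.submatrix_apply, pathM, Matrix.of_apply, Fin.succ_inj]
  congr 1
  simp [Fin.val_succ]

lemma pathM_det (m : ℕ) : (pathM m).det = (-1)^m * (m + 1) := by
  induction m using Nat.twoStepInduction with
  | zero => simp [Matrix.det_fin_zero]
  | one => simp [Matrix.det_fin_one, pathM]
  | more m ih0 ih1 =>
    rw [Matrix.det_succ_row_zero]
    rw [Fin.sum_univ_succ, Fin.sum_univ_succ]
    have hz : ∀ j : Fin m, ((-1:ℤ)) ^ (((j.succ.succ : Fin (m+2)) : ℕ)) *
        pathM (m+2) 0 j.succ.succ *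
        ((pathM (m+2)).submatrix Fin.succ (j.succ.succ).succAbove).det = 0 := by
      intro j
      have : pathM (m+2) 0 j.succ.succ = 0 := by
        simp [pathM, Fin.ext_iff]
      simp [this]
    rw [Finset.sum_congr rfl (fun j _ => hz j), Finset.sum_const_zero, add_zero]
    have h00 : pathM (m+2) 0 0 = -2 := by simp [pathM]
    have h01 : pathM (m+2) 0 (0:Fin (m+1)).succ = 1 := by
      simp [pathM, Fin.ext_iff]
    have hsub0 : (pathM (m+2)).submatrix Fin.succ (Fin.succAbove 0) = pathM (m+1) := by
      rw [Fin.succAbove_zero]; exact pathM_shift (m+1)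
    rw [h00, h01, hsub0]
    have hQ : ((pathM (m+2)).submatrix Fin.succ ((0:Fin (m+1)).succ.succAbove)).det
        = (pathM m).det := by
      set Q := (pathM (m+2)).submatrix Fin.succ ((0:Fin (m+1)).succ.succAbove) with hQdef
      rw [Matrix.det_succ_column_zero, Fin.sum_univ_succ]
      have hQ00 : Q 0 0 = 1 := by
        simp [hQdef, pathM, Fin.succAbove, Fin.ext_iff]
      have hz2 : ∀ i : Fin m, ((-1:ℤ)) ^ (((i.succ : Fin (m+1)) : ℕ)) *
          Q i.succ 0 * ((Q.submatrix i.succ.succAbove Fin.succ)).det = 0 := by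
        intro i
        have : Q i.succ 0 = 0 := by
          simp [hQdef, pathM, Fin.succAbove, Fin.ext_iff]
        simp [this]
      rw [Finset.sum_congr rfl (fun i _ => hz2 i), Finset.sum_const_zero, add_zero,
        hQ00, Fin.succAbove_zero]
      have hQs : Q.submatrix Fin.succ Fin.succ = pathM m := by
        ext i j
        simp only [hQdef, Matrix.submatrix_apply]
        have hc : (0:Fin (m+1)).succ.succAbove j.succ = j.succ.succ := by
          apply Fin.succAbove_of_le_castSucc
          simp [Fin.le_def]
        rw [hc]
        simp only [pathM, Matrix.of_apply, Fin.val_succ]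
        congr 1
        · simp [Fin.ext_iff]
        · congr 1
          simp [Fin.ext_iff]
      rw [hQs]
      simp
    rw [hQ, ih1, ih0]
    simp only [Fin.val_zero, Fin.val_succ, pow_zero, pow_one]
    push_cast
    ring


/-- The absolute value of the determinant of the fork matrix `M_n` equals `2n`. -/
theorem forkMatrix_det (n : ℕ) (hn : 1 ≤ n) :
    (forkMatrix n).det.natAbs = 2 * n := by
  obtain ⟨m, rfl⟩ : ∃ m, n = m + 1 := ⟨n - 1, by omega⟩
  have step1 : (forkMatrix (m+1)).det =
      - ((forkMatrix (m+1)).submatrix Fin.succ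
          ((⟨1, by omega⟩ : Fin (2*(m+1)+1)).succAbove)).det := by
    rw [Matrix.det_succ_row_zero]
    rw [Finset.sum_eq_single (⟨1, by omega⟩ : Fin (2*(m+1)+1))]
    · rw [entry01 (m+1) 0 ⟨1, by omega⟩ rfl rfl]
      norm_num
    · intro j _ hj
      rw [row0_zero (m+1) 0 j rfl (fun h => hj (Fin.ext h))]
      ring
    · intro h; exact absurd (Finset.mem_univ _) h
  set A := (forkMatrix (m+1)).submatrix Fin.succ
      ((⟨1, by omega⟩ : Fin (2*(m+1)+1)).succAbove) with hA
  have step2 : A.det = (A.submatrix Fin.succ Fin.succ).det := by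
    rw [Matrix.det_succ_column_zero (n := 2*m+1)]
    rw [Finset.sum_eq_single (0 : Fin ((2*m+1).succ))]
    · have hA00 : A 0 0 = 1 := by
        rw [hA]
        simp only [Matrix.submatrix_apply]
        apply entry10
        · rfl
        · have : ((⟨1, by omega⟩ : Fin (2*(m+1)+1)).succAbove 0) = 0 := by
            apply Fin.succAbove_of_castSucc_lt
            simp [Fin.lt_def]
          rw [this]; rfl
      rw [hA00, Fin.succAbove_zero]
      norm_num
    · intro i _ hi
      have : A i 0 = 0 := by
        rw [hA]
        simp only [Matrix.submatrix_apply]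
        apply col0_zero
        · simp only [Fin.val_succ]
          have : (i:ℕ) ≠ 0 := fun h => hi (Fin.ext h)
          omega
        · have : ((⟨1, by omega⟩ : Fin (2*(m+1)+1)).succAbove 0) = 0 := by
            apply Fin.succAbove_of_castSucc_lt
            simp [Fin.lt_def]
          rw [this]; rfl
      rw [this]; ring
    · intro h; exact absurd (Finset.mem_univ _) h
  set B := A.submatrix Fin.succ Fin.succ with hB
  have step3 : pathM (2*m+1) = B.submatrix (forkEquiv m) (forkEquiv m) := by
    ext i j
    rw [Matrix.submatrix_apply, hB, Matrix.submatrix_apply, hA, Matrix.submatrix_apply]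
    rw [eq_comm]
    apply fork_entry
    · rfl
    · have hc : ((⟨1, by omega⟩ : Fin (2*(m+1)+1)).succAbove ((forkEquiv m j).succ))
          = (forkEquiv m j).succ.succ := by
        apply Fin.succAbove_of_le_castSucc
        simp [Fin.le_def]
      rw [hc]; rfl
  have hdetB : B.det = (pathM (2*m+1)).det := by
    rw [step3]
    exact (Matrix.det_submatrix_equiv_self _ _).symm
  rw [step1, step2, hdetB, pathM_det]
  have : ((-1:ℤ))^(2*m+1) = -1 := by
    rw [pow_succ, pow_mul]
    norm_num
  rw [this]
  push_cast
  have : (-(-1 * (2 * (m:ℤ) + 1 + 1))) = 2*m+2 := by ring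
  rw [this]
  omega
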